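/- Let 0 < α̲ ≤ ᾱ, let a > 0, C_v > 0, b ≥ 0, j ∈ ℕ, and let v : ℂ → ℂ be entire with |v(z)| ≤ C_v (a+b|z|)^j · decay(z) for all z ∈ ℂ. If jb/(a·α̲) < 1, then for every z ∈ ℂ: |∫₀^∞ ∫₀^∞ v(z+t+τ) dτ dt| ≤ C_v·(1/α̲²)·(1/(1 − jb/(α̲·a)))²·(a+b|z|)^j·decay(z). -/

import Mathlib

open Set MeasureTheory

/-- The decay weight: `exp(-α̲·Re z)` for `Re z ≥ 0` and `exp(-ᾱ·Re z)` for `Re z < 0`. -/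
noncomputable def decay (ua oa : ℝ) (z : ℂ) : ℝ :=
  if 0 ≤ z.re then Real.exp (-ua * z.re) else Real.exp (-oa * z.re)

lemma decay_pos (ua oa : ℝ) (z : ℂ) : 0 < decay ua oa z := by
  unfold decay; split <;> exact Real.exp_pos _

lemma decay_shift {ua oa : ℝ} (hua : 0 < ua) (huo : ua ≤ oa) (z : ℂ) {t : ℝ} (ht : 0 ≤ t) :
    decay ua oa (z + (t : ℂ)) ≤ decay ua oa z * Real.exp (-ua * t) := by
  have hre : (z + (t : ℂ)).re = z.re + t := by simp
  unfold decay
  rw [hre]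
  split_ifs with h1 h2 h2
  · rw [← Real.exp_add]; exact Real.exp_le_exp.mpr (by nlinarith)
  · rw [← Real.exp_add]; exact Real.exp_le_exp.mpr (by nlinarith)
  · exact absurd (by linarith : (0:ℝ) ≤ z.re + t) h1
  · rw [← Real.exp_add]; exact Real.exp_le_exp.mpr (by nlinarith)

lemma poly_shift {a b : ℝ} (ha : 0 < a) (hb : 0 ≤ b) (j : ℕ) (z : ℂ) {t : ℝ} (ht : 0 ≤ t) :
    (a + b * ‖z + (t : ℂ)‖) ^ j ≤
      (a + b * ‖z‖) ^ j * Real.exp ((j : ℝ) * (b * t / a)) := by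
  have hA : 0 < a + b * ‖z‖ := by positivity
  have h1 : ‖z + (t : ℂ)‖ ≤ ‖z‖ + t := by
    calc ‖z + (t : ℂ)‖ ≤ ‖z‖ + ‖(t : ℂ)‖ :=
          norm_add_le _ _
      _ = ‖z‖ + t := by rw [Complex.norm_real, Real.norm_eq_abs, abs_of_nonneg ht]
  have h2 : a + b * ‖z + (t : ℂ)‖ ≤
      (a + b * ‖z‖) * Real.exp (b * t / a) := by
    have h3 : a + b * ‖z + (t : ℂ)‖ ≤ a + b * ‖z‖ + b * t := by nlinarith
    have h4 : a + b * ‖z‖ + b * t ≤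
        (a + b * ‖z‖) * (1 + b * t / (a + b * ‖z‖)) := by
      rw [mul_add, mul_one, mul_div_cancel₀ _ hA.ne']
    have h5 : 1 + b * t / (a + b * ‖z‖) ≤ Real.exp (b * t / (a + b * ‖z‖)) := by
      linarith [Real.add_one_le_exp (b * t / (a + b * ‖z‖))]
    have h6 : Real.exp (b * t / (a + b * ‖z‖)) ≤ Real.exp (b * t / a) := by
      apply Real.exp_le_exp.mpr
      gcongr <;>
        nlinarith [mul_nonneg hb ht, mul_nonneg hb (norm_nonneg z), norm_nonneg z]
    nlinarith [Real.exp_pos (b * t / (a + b * ‖z‖))]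
  calc (a + b * ‖z + (t : ℂ)‖) ^ j
      ≤ ((a + b * ‖z‖) * Real.exp (b * t / a)) ^ j := by
        apply pow_le_pow_left₀ (by positivity) h2
    _ = (a + b * ‖z‖) ^ j * Real.exp ((j : ℝ) * (b * t / a)) := by
        rw [mul_pow, ← Real.exp_nat_mul]

/-- Combined pointwise shift bound. -/
lemma M_shift {ua oa a b : ℝ} (j : ℕ) (hua : 0 < ua) (huo : ua ≤ oa) (ha : 0 < a) (hb : 0 ≤ b)
    (z : ℂ) {t : ℝ} (ht : 0 ≤ t) :
    (a + b * ‖z + (t : ℂ)‖) ^ j * decay ua oa (z + (t : ℂ)) ≤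
      (a + b * ‖z‖) ^ j * decay ua oa z *
        Real.exp (-(ua - (j : ℝ) * b / a) * t) := by
  have h1 := poly_shift ha hb j z ht
  have h2 := decay_shift hua huo z ht
  have he : Real.exp ((j : ℝ) * (b * t / a)) * Real.exp (-ua * t) =
      Real.exp (-(ua - (j : ℝ) * b / a) * t) := by
    rw [← Real.exp_add]; ring_nf
  calc (a + b * ‖z + (t : ℂ)‖) ^ j * decay ua oa (z + (t : ℂ))
      ≤ ((a + b * ‖z‖) ^ j * Real.exp ((j : ℝ) * (b * t / a))) *
          (decay ua oa z * Real.exp (-ua * t)) := by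
        apply mul_le_mul h1 h2 (decay_pos ua oa _).le (by positivity)
    _ = (a + b * ‖z‖) ^ j * decay ua oa z *
          (Real.exp ((j : ℝ) * (b * t / a)) * Real.exp (-ua * t)) := by ring
    _ = _ := by rw [he]

lemma single_integral_bound {δ K : ℝ} (hδ : 0 < δ) (hK : 0 ≤ K) (f : ℝ → ℂ)
    (hf : ∀ t ∈ Ioi (0:ℝ), ‖f t‖ ≤ K * Real.exp (-δ * t)) :
    ‖∫ t in Ioi (0:ℝ), f t‖ ≤ K / δ := by
  have hint : IntegrableOn (fun t : ℝ => K * Real.exp (-δ * t)) (Ioi 0) :=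
    (exp_neg_integrableOn_Ioi 0 hδ).const_mul K
  have hval : (∫ t in Ioi (0:ℝ), K * Real.exp (-δ * t)) = K / δ := by
    rw [integral_const_mul]
    have : (∫ t in Ioi (0:ℝ), Real.exp (-δ * t)) = δ⁻¹ := by
      have := integral_comp_mul_left_Ioi (fun x => Real.exp (-x)) 0 hδ
      simp only [mul_zero, integral_exp_neg_Ioi_zero, smul_eq_mul, mul_one, neg_mul] at this ⊢
      exact this
    rw [this]; ring
  calc ‖∫ t in Ioi (0:ℝ), f t‖ ≤ ∫ t in Ioi (0:ℝ), ‖f t‖ := norm_integral_le_integral_norm f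
    _ ≤ ∫ t in Ioi (0:ℝ), K * Real.exp (-δ * t) := by
        apply integral_mono_of_nonneg
        · exact Filter.Eventually.of_forall fun t => norm_nonneg _
        · exact hint
        · filter_upwards [ae_restrict_mem measurableSet_Ioi] with t ht using hf t ht
    _ = K / δ := hval

/-- Bound for the double antiderivative (iterated integrals along rays parallel
to the positive real axis) of an entire function satisfying an exponentially
decaying polynomial bound. -/
theorem stmt_6 (ua oa a Cv b : ℝ) (j : ℕ)
    (hua : 0 < ua) (huo : ua ≤ oa) (ha : 0 < a) (hCv : 0 < Cv) (hb : 0 ≤ b)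
    (v : ℂ → ℂ) (hv : Differentiable ℂ v)
    (hvb : ∀ z : ℂ,
      ‖v z‖ ≤ Cv * (a + b * ‖z‖) ^ j * decay ua oa z)
    (hsmall : (j : ℝ) * b / (a * ua) < 1) :
    ∀ z : ℂ,
      ‖∫ t in Ioi (0:ℝ), ∫ τ in Ioi (0:ℝ), v (z + (t : ℂ) + (τ : ℂ))‖ ≤
        Cv * (1 / ua ^ 2) * (1 / (1 - (j : ℝ) * b / (ua * a))) ^ 2 *
          (a + b * ‖z‖) ^ j * decay ua oa z := by
  intro z
  set δ : ℝ := ua - (j : ℝ) * b / a with hδdef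
  have hδ : 0 < δ := by
    have h0 : (j : ℝ) * b < a * ua := (div_lt_one (by positivity)).mp hsmall
    have h1 : (j : ℝ) * b / a < ua := by
      rw [div_lt_iff₀ ha]; nlinarith
    rw [hδdef]; linarith
  set M : ℝ := Cv * (a + b * ‖z‖) ^ j * decay ua oa z with hMdef
  have hM : 0 ≤ M := by
    have := decay_pos ua oa z
    positivity
  -- Pointwise bound on v(z+t+τ)
  have hpt : ∀ t ∈ Ioi (0:ℝ), ∀ τ ∈ Ioi (0:ℝ),
      ‖v (z + (t : ℂ) + (τ : ℂ))‖ ≤ M * Real.exp (-δ * t) * Real.exp (-δ * τ) := by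
    intro t ht τ hτ
    have ht' : (0:ℝ) ≤ t := le_of_lt ht
    have hτ' : (0:ℝ) ≤ τ := le_of_lt hτ
    have h1 := hvb (z + (t : ℂ) + (τ : ℂ))
    have h2 := M_shift j hua huo ha hb (z + (t : ℂ)) hτ'
    have h3 := M_shift j hua huo ha hb z ht'
    have hd1 := decay_pos ua oa (z + (t:ℂ))
    have hd := decay_pos ua oa z
    have hAt : (0:ℝ) ≤ (a + b * ‖z + (t:ℂ)‖) ^ j := by positivity
    have he1 : (0:ℝ) < Real.exp (-δ * τ) := Real.exp_pos _
    have he2 : (0:ℝ) < Real.exp (-δ * t) := Real.exp_pos _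
    calc ‖v (z + (t : ℂ) + (τ : ℂ))‖
        ≤ Cv * ((a + b * ‖z + (t:ℂ) + (τ:ℂ)‖) ^ j *
            decay ua oa (z + (t:ℂ) + (τ:ℂ))) := by
          rw [← mul_assoc]; exact h1
      _ ≤ Cv * ((a + b * ‖z + (t:ℂ)‖) ^ j * decay ua oa (z + (t:ℂ)) *
            Real.exp (-δ * τ)) := by
          apply mul_le_mul_of_nonneg_left _ hCv.le
          exact h2
      _ ≤ Cv * ((a + b * ‖z‖) ^ j * decay ua oa z * Real.exp (-δ * t) *
            Real.exp (-δ * τ)) := by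
          apply mul_le_mul_of_nonneg_left _ hCv.le
          apply mul_le_mul_of_nonneg_right h3 he1.le
      _ = M * Real.exp (-δ * t) * Real.exp (-δ * τ) := by rw [hMdef]; ring
  -- inner integral bound
  have hinner : ∀ t ∈ Ioi (0:ℝ),
      ‖∫ τ in Ioi (0:ℝ), v (z + (t : ℂ) + (τ : ℂ))‖ ≤
        (M / δ) * Real.exp (-δ * t) := by
    intro t ht
    have := single_integral_bound hδ (by positivity : (0:ℝ) ≤ M * Real.exp (-δ * t))
      (fun τ => v (z + (t : ℂ) + (τ : ℂ))) (fun τ hτ => hpt t ht τ hτ)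
    calc ‖∫ τ in Ioi (0:ℝ), v (z + (t : ℂ) + (τ : ℂ))‖
        ≤ M * Real.exp (-δ * t) / δ := this
      _ = (M / δ) * Real.exp (-δ * t) := by ring
  have houter : ‖∫ t in Ioi (0:ℝ), ∫ τ in Ioi (0:ℝ), v (z + (t : ℂ) + (τ : ℂ))‖ ≤
      (M / δ) / δ :=
    single_integral_bound hδ (by positivity)
      (fun t => ∫ τ in Ioi (0:ℝ), v (z + (t : ℂ) + (τ : ℂ))) hinner
  have hfinal : (M / δ) / δ =
      Cv * (1 / ua ^ 2) * (1 / (1 - (j : ℝ) * b / (ua * a))) ^ 2 *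
        (a + b * ‖z‖) ^ j * decay ua oa z := by
    have hδeq : δ = ua * (1 - (j : ℝ) * b / (ua * a)) := by
      rw [hδdef]; field_simp
    rw [hMdef, hδeq]
    have h1 : (1 : ℝ) - (j : ℝ) * b / (ua * a) ≠ 0 := by
      have : (j : ℝ) * b / (a * ua) < 1 := hsmall
      rw [mul_comm a ua] at this
      linarith [this]
    field_simp
  calc ‖∫ t in Ioi (0:ℝ), ∫ τ in Ioi (0:ℝ), v (z + (t : ℂ) + (τ : ℂ))‖ ≤ (M / δ) / δ := houter
    _ = _ := hfinal
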